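/- As θ → π from the left (with θ ∈ (3π/4, π)), the integral ∫_{−∞}^{∞} ds / ((1 + cosh(s)) · (cosh(πs/θ) − cos(π²/θ))) converges to 2/3. -/

import Mathlib

open Real MeasureTheory Filter Set Topology

lemma cosh_lb (x : ℝ) : (1 + x ^ 2) / 4 ≤ 1 + Real.cosh x := by
  rw [← Real.cosh_abs]
  have h := Real.quadratic_le_exp_of_nonneg (abs_nonneg x)
  have h2 : (0:ℝ) < Real.exp (-|x|) := Real.exp_pos _
  rw [Real.cosh_eq]
  nlinarith [sq_abs x, abs_nonneg x]

lemma tanh_eq' (x : ℝ) :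
    Real.tanh x = (1 - Real.exp (-2 * x)) / (1 + Real.exp (-2 * x)) := by
  have e1 : Real.exp (-2 * x) = (Real.exp x ^ 2)⁻¹ := by
    rw [show (-2:ℝ) * x = -(x + x) by ring, Real.exp_neg, Real.exp_add, sq]
  have e2 : Real.exp (-x) = (Real.exp x)⁻¹ := Real.exp_neg x
  have hc : Real.cosh x ≠ 0 := (Real.cosh_pos x).ne'
  have hd : (1:ℝ) + Real.exp (-2 * x) ≠ 0 := by positivity
  rw [Real.tanh_eq_sinh_div_cosh] at *
  rw [div_eq_div_iff hc hd, Real.sinh_eq, Real.cosh_eq, e1, e2]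
  have := Real.exp_ne_zero x
  field_simp

lemma tendsto_tanh_top : Tendsto Real.tanh atTop (𝓝 1) := by
  have h : Tendsto (fun x : ℝ => Real.exp (-2 * x)) atTop (𝓝 0) := by
    apply Real.tendsto_exp_atBot.comp
    exact Tendsto.const_mul_atTop_of_neg (by norm_num) tendsto_id
  have h1 : Tendsto (fun x : ℝ => (1 - Real.exp (-2*x)) / (1 + Real.exp (-2*x))) atTop
      (𝓝 ((1 - 0) / (1 + 0))) :=
    Tendsto.div (Tendsto.sub tendsto_const_nhds h) (Tendsto.add tendsto_const_nhds h)
      (by norm_num)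
  norm_num at h1
  convert h1 using 1
  funext x; rw [tanh_eq' x]; norm_num

lemma tendsto_tanh_bot : Tendsto Real.tanh atBot (𝓝 (-1)) := by
  have h : Tendsto (fun x : ℝ => Real.tanh (-x)) atBot (𝓝 1) :=
    tendsto_tanh_top.comp tendsto_neg_atBot_atTop
  simp only [Real.tanh_neg] at h
  have := h.neg
  simpa using this

lemma hasDerivAt_tanh' (x : ℝ) : HasDerivAt Real.tanh ((Real.cosh x ^ 2)⁻¹) x := by
  have h := (Real.hasDerivAt_sinh x).div (Real.hasDerivAt_cosh x) (Real.cosh_pos x).ne'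
  have he : (fun x => Real.sinh x / Real.cosh x) = Real.tanh := by
    funext y; rw [Real.tanh_eq_sinh_div_cosh]
  rw [show (Real.sinh / Real.cosh) = Real.tanh from he] at h
  refine h.congr_deriv (Eq.symm ?_)
  have h2 := Real.cosh_sq_sub_sinh_sq x
  field_simp
  nlinarith

noncomputable def Faux (s : ℝ) : ℝ := (1/2) * (Real.tanh (s/2) - Real.tanh (s/2) ^ 3 / 3)

lemma hasDerivAt_Faux (s : ℝ) :
    HasDerivAt Faux (1 / ((1 + Real.cosh s) * (Real.cosh s + 1))) s := by
  have hu : HasDerivAt (fun s : ℝ => s / 2) (1/2) s := (hasDerivAt_id s).div_const 2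
  have ht : HasDerivAt (fun s : ℝ => Real.tanh (s/2))
      ((Real.cosh (s/2) ^ 2)⁻¹ * (1/2)) s := by
        have := (hasDerivAt_tanh' (s/2)).comp s hu
        exact this
  have hF := ((ht.sub ((ht.pow 3).div_const 3)).const_mul (1/2 : ℝ))
  refine hF.congr_deriv (Eq.symm ?_)
  have hc : (0:ℝ) < Real.cosh (s/2) := Real.cosh_pos _
  have h2 : Real.cosh s = 2 * Real.cosh (s/2) ^ 2 - 1 := by
    have := Real.cosh_two_mul (s/2)
    have h3 := Real.cosh_sq_sub_sinh_sq (s/2)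
    rw [show 2 * (s/2) = s by ring] at this
    nlinarith
  have hC : (0:ℝ) < Real.cosh (s/2) ^ 2 := by positivity
  have ht2 : Real.tanh (s/2) ^ 2 = 1 - (Real.cosh (s/2) ^ 2)⁻¹ := by
    rw [Real.tanh_eq_sinh_div_cosh]
    have h3 := Real.cosh_sq_sub_sinh_sq (s/2)
    field_simp
    linarith
  rw [h2, show (3:ℕ) - 1 = 2 from rfl, ht2]
  have hC' : Real.cosh (s/2) ^ 2 ≠ 0 := hC.ne'
  field_simp
  ring

lemma tendsto_Faux_top : Tendsto Faux atTop (𝓝 (1/3)) := by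
  have h : Tendsto (fun s : ℝ => Real.tanh (s/2)) atTop (𝓝 1) :=
    tendsto_tanh_top.comp (tendsto_id.atTop_div_const two_pos)
  have := ((h.sub ((h.pow 3).div_const 3)).const_mul (1/2 : ℝ))
  norm_num at this
  convert this using 2
  rfl

lemma tendsto_Faux_bot : Tendsto Faux atBot (𝓝 (-(1/3))) := by
  have h : Tendsto (fun s : ℝ => Real.tanh (s/2)) atBot (𝓝 (-1)) :=
    tendsto_tanh_bot.comp (tendsto_id.atBot_div_const two_pos)
  have := ((h.sub ((h.pow 3).div_const 3)).const_mul (1/2 : ℝ))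
  norm_num at this
  convert this using 2
  rfl

lemma integrable_flimit :
    Integrable (fun s : ℝ => 1 / ((1 + Real.cosh s) * (Real.cosh s + 1))) := by
  have haux : Integrable (fun s : ℝ => 4 * (1 + s ^ 2)⁻¹) :=
    integrable_inv_one_add_sq.const_mul 4
  refine haux.mono' ?_ ?_
  · apply Continuous.aestronglyMeasurable
    refine continuous_const.div ?_ fun s => ?_
    · fun_prop
    · have := Real.cosh_pos s; positivity
  · filter_upwards with s
    have h1 := cosh_lb s
    have h2 := Real.one_le_cosh s
    have hp : (0:ℝ) < (1 + Real.cosh s) * (Real.cosh s + 1) := by nlinarith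
    rw [Real.norm_eq_abs, abs_of_pos (by positivity)]
    rw [div_le_iff₀ hp]
    have hq : (0:ℝ) < 1 + s ^ 2 := by positivity
    rw [mul_comm (4:ℝ), inv_mul_eq_div, div_mul_eq_mul_div, le_div_iff₀ hq] at *
    nlinarith

lemma integral_flimit :
    ∫ s : ℝ, 1 / ((1 + Real.cosh s) * (Real.cosh s + 1)) = 2/3 := by
  have := MeasureTheory.integral_of_hasDerivAt_of_tendsto hasDerivAt_Faux
    integrable_flimit tendsto_Faux_bot tendsto_Faux_top
  rw [this]; norm_num

lemma pi_pos' : (0:ℝ) < Real.pi := Real.pi_pos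



/-- As `θ → π` from the left (with `θ ∈ (3π/4, π)`), the integral
`∫_{−∞}^{∞} ds / ((1 + cosh s)(cosh(πs/θ) − cos(π²/θ)))` converges to `2/3`. -/
theorem corner_integral_tendsto :
    Filter.Tendsto
      (fun θ : ℝ => ∫ s : ℝ,
        1 / ((1 + Real.cosh s) * (Real.cosh (Real.pi * s / θ) - Real.cos (Real.pi ^ 2 / θ))))
      (nhdsWithin Real.pi (Set.Ioo (3 * Real.pi / 4) Real.pi))
      (nhds (2 / 3)) := by
  have hpi := Real.pi_pos
  have hlt : 3 * Real.pi / 4 < Real.pi := by linarith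
  haveI : (nhdsWithin Real.pi (Set.Ioo (3 * Real.pi / 4) Real.pi)).NeBot :=
    right_nhdsWithin_Ioo_neBot hlt
  -- key fact: for θ in the interval, cos (π²/θ) ≤ -1/2
  have hcos : ∀ θ ∈ Set.Ioo (3 * Real.pi / 4) Real.pi,
      Real.cos (Real.pi ^ 2 / θ) ≤ -(1/2) := by
    intro θ hθ
    obtain ⟨h1, h2⟩ := hθ
    have hθ0 : 0 < θ := by linarith
    set x := Real.pi ^ 2 / θ - Real.pi with hx
    have hx0 : 0 ≤ x := by
      rw [hx, sub_nonneg, le_div_iff₀ hθ0]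
      nlinarith
    have hx1 : x ≤ Real.pi / 3 := by
      rw [hx, sub_le_iff_le_add, div_le_iff₀ hθ0]
      nlinarith
    have h3 : Real.cos (Real.pi / 3) ≤ Real.cos x :=
      Real.cos_le_cos_of_nonneg_of_le_pi hx0 (by linarith) hx1
    rw [Real.cos_pi_div_three] at h3
    have h4 : Real.pi ^ 2 / θ = x + Real.pi := by rw [hx]; ring
    rw [h4, Real.cos_add_pi]
    linarith
  -- the denominator bound
  have hden : ∀ θ ∈ Set.Ioo (3 * Real.pi / 4) Real.pi, ∀ s : ℝ,
      (3:ℝ)/2 ≤ Real.cosh (Real.pi * s / θ) - Real.cos (Real.pi ^ 2 / θ) := by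
    intro θ hθ s
    have := hcos θ hθ
    have := Real.one_le_cosh (Real.pi * s / θ)
    linarith
  apply Filter.Tendsto.congr' (f₁ := fun θ : ℝ => ∫ s : ℝ,
        1 / ((1 + Real.cosh s) * (Real.cosh (Real.pi * s / θ) - Real.cos (Real.pi ^ 2 / θ))))
    (by rfl)
  rw [show (2:ℝ)/3 = ∫ s : ℝ, 1 / ((1 + Real.cosh s) * (Real.cosh s + 1)) from
    integral_flimit.symm]
  apply MeasureTheory.tendsto_integral_filter_of_dominated_convergence
    (bound := fun s : ℝ => (2/3) * (1 + Real.cosh s)⁻¹)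
  · -- a.e. strong measurability
    filter_upwards [self_mem_nhdsWithin] with θ hθ
    apply Continuous.aestronglyMeasurable
    refine continuous_const.div ?_ fun s => ?_
    · fun_prop
    · have h1 := hden θ hθ s
      have h2 := Real.one_le_cosh s
      nlinarith
  · -- bound
    filter_upwards [self_mem_nhdsWithin] with θ hθ
    filter_upwards with s
    have h1 := hden θ hθ s
    have h2 := Real.one_le_cosh s
    have hp : (0:ℝ) < (1 + Real.cosh s) *
        (Real.cosh (Real.pi * s / θ) - Real.cos (Real.pi ^ 2 / θ)) := by nlinarith
    rw [Real.norm_eq_abs, abs_of_pos (by positivity)]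
    rw [div_le_iff₀ hp, mul_comm ((2:ℝ)/3), mul_assoc]
    have h3 : (1:ℝ) ≤ (1 + Real.cosh s)⁻¹ * ((2:ℝ)/3 * ((1 + Real.cosh s) *
        (Real.cosh (Real.pi * s / θ) - Real.cos (Real.pi ^ 2 / θ)))) := by
      rw [inv_mul_eq_div, le_div_iff₀ (by linarith)]
      nlinarith
    linarith
  · -- bound integrable
    have haux : Integrable (fun s : ℝ => 4 * (1 + s ^ 2)⁻¹) :=
      integrable_inv_one_add_sq.const_mul 4
    refine haux.mono' ?_ ?_
    · apply Continuous.aestronglyMeasurable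
      apply Continuous.mul continuous_const
      refine Continuous.inv₀ (by fun_prop) fun s => ?_
      have := Real.one_le_cosh s; positivity
    · filter_upwards with s
      have h1 := cosh_lb s
      have h2 := Real.one_le_cosh s
      have hp : (0:ℝ) < 1 + Real.cosh s := by linarith
      have hq : (0:ℝ) < 1 + s ^ 2 := by positivity
      rw [Real.norm_eq_abs, abs_of_pos (by positivity)]
      rw [mul_inv_le_iff₀ hp, mul_comm (4:ℝ), inv_mul_eq_div, div_mul_eq_mul_div,
        le_div_iff₀ hq]
      nlinarith
  · -- pointwise convergence
    filter_upwards with s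
    have hC : ContinuousAt (fun θ : ℝ =>
        1 / ((1 + Real.cosh s) * (Real.cosh (Real.pi * s / θ) - Real.cos (Real.pi ^ 2 / θ))))
        Real.pi := by
      have hne : Real.pi ≠ 0 := hpi.ne'
      have h1 : ContinuousAt (fun θ : ℝ => Real.pi * s / θ) Real.pi :=
        ContinuousAt.div continuousAt_const continuousAt_id hne
      have h2 : ContinuousAt (fun θ : ℝ => Real.pi ^ 2 / θ) Real.pi :=
        ContinuousAt.div continuousAt_const continuousAt_id hne
      have h3 : ContinuousAt (fun θ : ℝ => (1 + Real.cosh s) *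
          (Real.cosh (Real.pi * s / θ) - Real.cos (Real.pi ^ 2 / θ))) Real.pi :=
        continuousAt_const.mul ((Real.continuous_cosh.continuousAt.comp h1).sub
          (Real.continuous_cos.continuousAt.comp h2))
      refine ContinuousAt.div continuousAt_const h3 ?_
      have e1 : Real.pi * s / Real.pi = s := by field_simp
      have e2 : Real.pi ^ 2 / Real.pi = Real.pi := by field_simp
      simp only [e1, e2, Real.cos_pi]
      have := Real.one_le_cosh s
      nlinarith
    have := hC.tendsto.mono_left
      (nhdsWithin_le_nhds (s := Set.Ioo (3 * Real.pi / 4) Real.pi))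
    convert this using 2
    have e1 : Real.pi * s / Real.pi = s := by field_simp
    have e2 : Real.pi ^ 2 / Real.pi = Real.pi := by field_simp
    simp only [e1, e2, Real.cos_pi]
    ring
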